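/- Suppose Qb²/(σ² + Pa²) < ρ. Let G(v) = (1+ρ)a²v² + 2√Q·a·b·v + Qb² − ρσ² − Pρa² and A = Pρ(1+ρ)a² + ρ(1+ρ)σ² − ρQb². Then A > 0, the quadratic G has exactly one positive root, and this root equals v₂* = (√A − √Q·b)/(a(1+ρ)); moreover F(v₂*) = ρ, where F(v) = (a·v + √Q·b)²/(σ² + a²(P − v²)). -/
import Mathlib


set_option maxHeartbeats 1600000

/-- When `F(0) < ρ`, the quadratic `G` has a unique positive root, given in
closed form, and `F` equals `ρ` at this root. -/
theorem stmt_9 (a b P Q σ2 ρ : ℝ) (ha : 0 < a) (hb : 0 < b) (hP : 0 < P)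
    (hQ : 0 < Q) (hσ : 0 < σ2) (hρ : 0 < ρ)
    (hF0 : Q * b ^ 2 / (σ2 + P * a ^ 2) < ρ)
    (G F : ℝ → ℝ) (A v2star : ℝ)
    (hG : ∀ v : ℝ, G v = (1 + ρ) * a ^ 2 * v ^ 2 + 2 * Real.sqrt Q * a * b * v +
      Q * b ^ 2 - ρ * σ2 - P * ρ * a ^ 2)
    (hA : A = P * ρ * (1 + ρ) * a ^ 2 + ρ * (1 + ρ) * σ2 - ρ * Q * b ^ 2)
    (hv2 : v2star = (Real.sqrt A - Real.sqrt Q * b) / (a * (1 + ρ)))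
    (hFdef : ∀ v : ℝ, F v =
      (a * v + Real.sqrt Q * b) ^ 2 / (σ2 + a ^ 2 * (P - v ^ 2))) :
    A > 0 ∧
    (∃! v : ℝ, 0 < v ∧ G v = 0) ∧
    (0 < v2star ∧ G v2star = 0) ∧
    F v2star = ρ := by
  have hden : (0:ℝ) < σ2 + P * a ^ 2 := by positivity
  have hQb : Q * b ^ 2 < ρ * (σ2 + P * a ^ 2) := by
    have := (div_lt_iff₀ hden).mp hF0; linarith
  have hApos : 0 < A := by
    rw [hA]; nlinarith
  set s := Real.sqrt A with hsdef
  set t := Real.sqrt Q with htdef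
  have hs2 : s ^ 2 = A := Real.sq_sqrt hApos.le
  have ht2 : t ^ 2 = Q := Real.sq_sqrt hQ.le
  have hspos : 0 < s := Real.sqrt_pos.mpr hApos
  have htpos : 0 < t := Real.sqrt_pos.mpr hQ
  clear_value s t
  have hAgt : Q * b ^ 2 < A := by rw [hA]; nlinarith
  have htb : 0 < t * b := mul_pos htpos hb
  have hstb : t * b < s := by
    have h1 : (t * b) ^ 2 < s ^ 2 := by
      rw [hs2]; nlinarith [ht2]
    nlinarith [h1, htb, hspos]
  have h1ρ : (0:ℝ) < 1 + ρ := by linarith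
  have hvpos : 0 < v2star := by
    rw [hv2]
    exact div_pos (by linarith) (by positivity)
  have hden2 : a * (1 + ρ) ≠ 0 := by positivity
  have hveq : v2star * (a * (1 + ρ)) = s - t * b := by
    rw [hv2]; field_simp
  have hsq : (a * v2star) ^ 2 * (1 + ρ) ^ 2 = (s - t * b) ^ 2 := by
    linear_combination (v2star * (a * (1 + ρ)) + (s - t * b)) * hveq
  have hGz : G v2star = 0 := by
    have h2 : G v2star * (1 + ρ) = 0 := by
      rw [hG]
      linear_combination hsq + 2 * t * b * hveq + hs2 - b ^ 2 * ht2 + hA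
    rcases mul_eq_zero.mp h2 with h | h
    · exact h
    · linarith
  refine ⟨hApos, ⟨v2star, ⟨hvpos, hGz⟩, ?_⟩, ⟨hvpos, hGz⟩, ?_⟩
  · rintro v ⟨hv, hGv⟩
    rw [hG] at hGv
    have hGz' := hGz
    rw [hG] at hGz'
    have key : (v - v2star) * ((1 + ρ) * a ^ 2 * (v + v2star) + 2 * t * a * b) = 0 := by
      linear_combination hGv - hGz'
    have hfac : (0:ℝ) < (1 + ρ) * a ^ 2 * (v + v2star) + 2 * t * a * b := by
      have : 0 < v + v2star := by linarith
      positivity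
    rcases mul_eq_zero.mp key with h | h
    · linarith
    · linarith
  · rw [hFdef]
    have hnum : (a * v2star + t * b) * (1 + ρ) = s + ρ * t * b := by
      linear_combination hveq
    have hdpos : 0 < σ2 + a ^ 2 * (P - v2star ^ 2) := by
      have h1 : (s - t * b) ^ 2 < s ^ 2 := by nlinarith [htb, hstb, hspos]
      have h2 : A < (1 + ρ) ^ 2 * (σ2 + P * a ^ 2) := by
        rw [hA]
        nlinarith [mul_pos hρ hden, mul_pos hρ (mul_pos hQ (pow_pos hb 2)), hden]
      have h3 : (a * v2star) ^ 2 * (1 + ρ) ^ 2 < (σ2 + P * a ^ 2) * (1 + ρ) ^ 2 := by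
        rw [hsq]
        calc (s - t * b) ^ 2 < s ^ 2 := h1
          _ = A := hs2
          _ < (1 + ρ) ^ 2 * (σ2 + P * a ^ 2) := h2
          _ = (σ2 + P * a ^ 2) * (1 + ρ) ^ 2 := by ring
      have h4 : (a * v2star) ^ 2 < σ2 + P * a ^ 2 :=
        lt_of_mul_lt_mul_right (by linarith [h3]) (pow_pos h1ρ 2).le
      nlinarith [h4]
    rw [div_eq_iff hdpos.ne']
    have key : ((a * v2star + t * b) ^ 2 - ρ * (σ2 + a ^ 2 * (P - v2star ^ 2))) *
        (1 + ρ) ^ 2 = 0 := by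
      linear_combination ((a * v2star + t * b) * (1 + ρ) + (s + ρ * t * b)) * hnum +
        ρ * hsq + (1 + ρ) * hs2 + ρ * (1 + ρ) * b ^ 2 * ht2 + (1 + ρ) * hA
    rcases mul_eq_zero.mp key with h | h
    · linarith
    · nlinarith [h]
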